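/- arXiv:2102.01440 — 3 statements merged into one kernel-verified Lean document; each statement's English description precedes it below -/
import Mathlib

section
/- Let J = (V, D, H) be a weakly winning justification for a parity game PG and let v be a node. Then every play of the parametrized parity game PG_{P_J} starting in v that is consistent with the strategy σ_{J,H(v)} is a path in D. -/
attribute [local instance] Classical.propDecidable

noncomputable section

/-- A parity game: an edge relation `E`, an owner function, a priority
function; every node has at least one outgoing edge. -/
structure ParityGame (V : Type*) where
  E : V → V → Prop
  owner : V → Fin 2
  pr : V → ℕ
  exists_succ : ∀ v, ∃ w, E v w

namespace ParityGame

variable {V : Type*}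

/-- An infinite sequence of nodes following the relation `R`. -/
def IsInfPath (R : V → V → Prop) (π : ℕ → V) : Prop :=
  ∀ i, R (π i) (π (i + 1))

/-- `ρ 0, …, ρ n` is a finite sequence of nodes following `R`. -/
def IsFinPath (R : V → V → Prop) (ρ : ℕ → V) (n : ℕ) : Prop :=
  ∀ i < n, R (ρ i) (ρ (i + 1))

/-- A cycle following `R`: a nonempty finite path ending in its starting node. -/
def IsCycle (R : V → V → Prop) (ρ : ℕ → V) (n : ℕ) : Prop :=
  0 < n ∧ IsFinPath R ρ n ∧ ρ n = ρ 0

/-- `w` is reachable from `v` following `R` (in zero or more steps). -/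
def Reaches (R : V → V → Prop) (v w : V) : Prop :=
  Relation.ReflTransGen R v w

/-- The infinite play `π` is won by player `α`: the highest priority
occurring infinitely often in the play has parity `α`. -/
def InfWonBy (G : ParityGame V) (π : ℕ → V) (α : Fin 2) : Prop :=
  ∃ p : ℕ, {i | G.pr (π i) = p}.Infinite ∧
    (∀ q : ℕ, {i | G.pr (π i) = q}.Infinite → q ≤ p) ∧ Fin.ofNat 2 p = α

/-- A play is consistent with a (partial, memoryless) strategy given as a set
of edges: whenever the play is at a node where the strategy selects an edge,
the play follows that edge. -/
def Consistent (σ : V → V → Prop) (π : ℕ → V) : Prop :=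
  ∀ i u, σ (π i) u → π (i + 1) = u

/-- Consistency of a finite play `ρ 0, …, ρ n` with a strategy. -/
def ConsistentFin (σ : V → V → Prop) (ρ : ℕ → V) (n : ℕ) : Prop :=
  ∀ i < n, ∀ u, σ (ρ i) u → ρ (i + 1) = u

/-- The default hypothesis: each node is won by the parity of its priority. -/
def Hd (G : ParityGame V) (v : V) : Fin 2 := Fin.ofNat 2 (G.pr v)

/-- `dj` is a direct justification for player `α` to win node `v`: a set
containing exactly one outgoing edge of `v` if `α` owns `v`, and all outgoing
edges of `v` otherwise. -/
def IsDJ (G : ParityGame V) (v : V) (α : Fin 2) (dj : Set (V × V)) : Prop :=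
  (G.owner v = α → ∃ w, G.E v w ∧ dj = {(v, w)}) ∧
  (G.owner v ≠ α → dj = {p | p.1 = v ∧ G.E v p.2})

/-- `dj` wins `v` for `α` under hypothesis `H`. -/
def WinsDJ (G : ParityGame V) (H : V → Fin 2) (v : V) (α : Fin 2)
    (dj : Set (V × V)) : Prop :=
  G.IsDJ v α dj ∧ ∀ p ∈ dj, H p.2 = α

/-- The parity game obtained from `G` and the parameter function `P` by
replacing, in every parameter `v`, the outgoing edges of `v` by the self-loop
`(v, v)` and the priority of `v` by its assigned winner `P v`. -/
def paramGame (G : ParityGame V) (P : V → Option (Fin 2)) : ParityGame V where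
  E := fun v w => if P v = none then G.E v w else w = v
  owner := G.owner
  pr := fun v => (P v).elim (G.pr v) Fin.val
  exists_succ := fun v => by
    by_cases h : P v = none
    · obtain ⟨w, hw⟩ := G.exists_succ v
      exact ⟨w, by simp [h, hw]⟩
    · exact ⟨v, by simp [h]⟩

/-- A justification for `G`: a subgraph `D` together with a hypothesis `H`. -/
structure Justification (G : ParityGame V) where
  D : V → V → Prop
  H : V → Fin 2

variable {G : ParityGame V}

namespace Justification

/-- `v` is justified in `J`: it has an outgoing edge in `D`. -/
def Justified (J : Justification G) (v : V) : Prop := ∃ w, J.D v w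

/-- The set of outgoing edges of `v` in `D`. -/
def outEdges (J : Justification G) (v : V) : Set (V × V) :=
  {p | p.1 = v ∧ J.D v p.2}

/-- `J` is weakly winning: the outgoing edges of every justified node `v`
form a direct justification winning `v` for `H v` under `H`. -/
def WeaklyWinning (J : Justification G) : Prop :=
  ∀ v, J.Justified v → G.WinsDJ J.H v (J.H v) (J.outEdges v)

/-- `J` is winning: weakly winning, and every infinite path in `D` is a play
of `G` won by the hypothetical winner of its nodes. -/
def Winning (J : Justification G) : Prop :=
  J.WeaklyWinning ∧
    ∀ π : ℕ → V, IsInfPath J.D π → G.InfWonBy π (J.H (π 0))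

/-- The parameter function `P_J`: the restriction of `H` to the unjustified
nodes of `J`. -/
def param (J : Justification G) (v : V) : Option (Fin 2) :=
  if J.Justified v then none else some (J.H v)

/-- The strategy `σ_{J,α}`: the set of edges `(v, w) ∈ D` with
`O v = H v = α`. -/
def strat (J : Justification G) (α : Fin 2) : V → V → Prop :=
  fun v w => J.D v w ∧ G.owner v = α ∧ J.H v = α

/-- `Par_J v`: the parameters (unjustified nodes) reachable from `v` in `D`. -/
def Par (J : Justification G) (v : V) : Set V :=
  {w | Reaches J.D v w ∧ ¬ J.Justified w}

/-- The justification level of `v`: the minimal priority of a parameter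
reachable from `v`, and `⊤` (`+∞`) if there is none. -/
def jl (J : Justification G) (v : V) : ℕ∞ :=
  sInf ((fun w => (G.pr w : ℕ∞)) '' J.Par v)

/-- The justification level of a direct justification: the minimum of the
justification levels of the targets of its edges. -/
def jlDJ (J : Justification G) (dj : Set (V × V)) : ℕ∞ :=
  sInf ((fun p : V × V => J.jl p.2) '' dj)

/-- `J` is safe: winning, unjustified nodes have their default winner as
hypothesis, and the justification level of every node is at least its
priority. -/
def Safe (J : Justification G) : Prop :=
  J.Winning ∧ (∀ v, ¬ J.Justified v → J.H v = G.Hd v) ∧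
    ∀ v, (G.pr v : ℕ∞) ≤ J.jl v

/-- `J[v : dj, α]`: replace the outgoing `D`-edges of `v` by `dj` and set
`H v := α`. -/
def update (J : Justification G) (v : V) (dj : Set (V × V)) (α : Fin 2) :
    Justification G where
  D := fun x y => if x = v then (x, y) ∈ dj else J.D x y
  H := fun x => if x = v then α else J.H x

/-- `J[v : ∅, Hf v | v ∈ S]`: remove the direct justification of every
`v ∈ S` and set `H v := Hf v`. -/
def resetAll (J : Justification G) (S : Set V) (Hf : V → Fin 2) :
    Justification G where
  D := fun x y => if x ∈ S then False else J.D x y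
  H := fun x => if x ∈ S then Hf x else J.H x

/-- `s_i(J)`: the number of justified nodes of justification level `i`. -/
def size (J : Justification G) (i : ℕ∞) : ℕ :=
  {v | J.Justified v ∧ J.jl v = i}.ncard

end Justification

/-- The preconditions of the operation `Justify(J, v, dj)`. -/
def Executable (G : ParityGame V) (J : Justification G) (v : V)
    (dj : Set (V × V)) : Prop :=
  J.Safe ∧ (∃ α, G.WinsDJ J.H v α dj) ∧
    (if J.Justified v then J.jl v < J.jlDJ dj else J.jl v ≤ J.jlDJ dj)

/-- The operation `Justify(J, v, dj)`, where `α` is the player winning `v`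
by `dj`: if `H v = α` this is `J[v : dj, α]`; otherwise all nodes reaching
`v` in `D` are reset to their default winner and then `v` gets `dj`. -/
def justify (G : ParityGame V) (J : Justification G) (v : V)
    (dj : Set (V × V)) (α : Fin 2) : Justification G :=
  if J.H v = α then J.update v dj α
  else (J.resetAll {w | Reaches J.D w v} G.Hd).update v dj α

/-- The empty justification `(V, ∅, H_d)`. -/
def Justification.empty (G : ParityGame V) : Justification G :=
  ⟨fun _ _ => False, G.Hd⟩

lemma ww_step {V : Type*} {G : ParityGame V} (J : Justification G)
    (hJ : J.WeaklyWinning) {α : Fin 2} {u w : V} (hu : J.Justified u)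
    (hH : J.H u = α) (hE : G.E u w) (hc : ∀ x, J.strat α u x → w = x) :
    J.D u w ∧ J.H w = α := by
  obtain ⟨⟨h1, h2⟩, hwin⟩ := hJ u hu
  by_cases ho : G.owner u = J.H u
  · obtain ⟨w', hEw', hset⟩ := h1 ho
    have hmem : (u, w') ∈ J.outEdges u := by rw [hset]; rfl
    have hD : J.D u w' := hmem.2
    have hw : w = w' := hc w' ⟨hD, hH ▸ ho, hH⟩
    subst hw
    exact ⟨hD, (hwin _ hmem).trans hH⟩
  · have hset := h2 ho
    have hmem : (u, w) ∈ J.outEdges u := by rw [hset]; exact ⟨rfl, hE⟩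
    exact ⟨hmem.2, (hwin _ hmem).trans hH⟩

/-- for a weakly winning justification `J` and node `v`, every
(infinite or finite) play of the parametrized parity game `PG_{P_J}` starting
in `v` and consistent with the strategy `σ_{J, H v}` is a path in `D`. -/
theorem stmt_4 {V : Type*} [Fintype V] {G : ParityGame V}
    (J : Justification G) (hJ : J.WeaklyWinning) (v : V) :
    (∀ π : ℕ → V, π 0 = v → IsInfPath G.E π → (∀ i, J.param (π i) = none) →
      Consistent (J.strat (J.H v)) π → IsInfPath J.D π) ∧
    (∀ (ρ : ℕ → V) (n : ℕ), ρ 0 = v → IsFinPath G.E ρ n →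
      (∀ i < n, J.param (ρ i) = none) → (J.param (ρ n)).isSome →
      ConsistentFin (J.strat (J.H v)) ρ n → IsFinPath J.D ρ n) := by
  constructor
  · intro π h0 hpath hparam hcons
    have hjust : ∀ i, J.Justified (π i) := by
      intro i
      have h := hparam i
      unfold Justification.param at h
      by_contra hc
      simp [hc] at h
    have key : ∀ i, J.H (π i) = J.H v := by
      intro i
      induction i with
      | zero => rw [h0]
      | succ i ih =>
        exact (ww_step J hJ (hjust i) ih (hpath i) (fun x hx => hcons i x hx)).2
    intro i
    exact (ww_step J hJ (hjust i) (key i) (hpath i) (fun x hx => hcons i x hx)).1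
  · intro ρ n h0 hpath hparam _ hcons
    have hjust : ∀ i < n, J.Justified (ρ i) := by
      intro i hi
      have h := hparam i hi
      unfold Justification.param at h
      by_contra hc
      simp [hc] at h
    have key : ∀ i, i ≤ n → J.H (ρ i) = J.H v := by
      intro i
      induction i with
      | zero => intro _; rw [h0]
      | succ i ih =>
        intro hi
        have hi' : i < n := hi
        exact (ww_step J hJ (hjust i hi') (ih (le_of_lt hi')) (hpath i hi')
          (fun x hx => hcons i hi' x hx)).2
    intro i hi
    exact (ww_step J hJ (hjust i hi) (key i (le_of_lt hi)) (hpath i hi)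
      (fun x hx => hcons i hi x hx)).1

end ParityGame

end
end

section
/- Let J = (V, D, H) be a weakly winning justification, v a node with H(v) = α, and dj a direct justification that wins v for α under H. Then J' = J[v : dj, α] is weakly winning. Moreover, if (v, v) ∉ dj and no node w with (v, w) ∈ dj can reach v in J, then every cycle of J' is a cycle of J; otherwise every cycle of J' that is not a cycle of J passes through v and contains at least one edge of dj. -/
attribute [local instance] Classical.propDecidable

noncomputable section

namespace ParityGame

variable {V : Type*}

variable {G : ParityGame V}

private lemma seg_reaches {V : Type*} {R : V → V → Prop} {ρ : ℕ → V} {a b : ℕ}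
    (hab : a ≤ b) (h : ∀ m, a ≤ m → m < b → R (ρ m) (ρ (m + 1))) :
    Relation.ReflTransGen R (ρ a) (ρ b) := by
  induction b, hab using Nat.le_induction with
  | base => exact .refl
  | succ b hab ih =>
    exact (ih fun m hm hmb => h m hm (by omega)).tail (h b hab (by omega))

/-- if `J` is weakly winning, `H v = α` and `dj` wins `v` for
`α` under `H`, then `J' = J[v : dj, α]` is weakly winning; if `(v,v) ∉ dj`
and no target of `dj` reaches `v` in `J`, every cycle of `J'` is a cycle of
`J`; and every new cycle of `J'` passes through `v` and contains an edge of
`dj`. -/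
theorem stmt_8 {V : Type*} [Fintype V] {G : ParityGame V}
    (J : Justification G) (hJ : J.WeaklyWinning) (v : V) (α : Fin 2)
    (dj : Set (V × V)) (hHv : J.H v = α) (hwin : G.WinsDJ J.H v α dj) :
    (J.update v dj α).WeaklyWinning ∧
    (((v, v) ∉ dj ∧ ∀ w, (v, w) ∈ dj → ¬ Reaches J.D w v) →
      ∀ (ρ : ℕ → V) (n : ℕ), IsCycle (J.update v dj α).D ρ n →
        IsCycle J.D ρ n) ∧
    (∀ (ρ : ℕ → V) (n : ℕ), IsCycle (J.update v dj α).D ρ n →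
      ¬ IsCycle J.D ρ n →
      (∃ i < n, ρ i = v) ∧ ∃ i < n, (ρ i, ρ (i + 1)) ∈ dj) := by
  -- H is unchanged as a function
  have hH' : (J.update v dj α).H = J.H := by
    funext x
    simp only [Justification.update]
    split
    · next h => subst h; exact hHv.symm
    · rfl
  have hfst : ∀ p ∈ dj, p.1 = v := by
    intro p hp
    rcases hwin.1 with ⟨h1, h2⟩
    by_cases ho : G.owner v = α
    · obtain ⟨w, _, hdj⟩ := h1 ho
      rw [hdj] at hp; simp only [Set.mem_singleton_iff] at hp; rw [hp]
    · rw [h2 ho] at hp; exact hp.1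
  refine ⟨?_, ?_, ?_⟩
  · -- weakly winning
    intro x hx
    rw [hH']
    by_cases hxv : x = v
    · subst hxv
      have hout : (J.update x dj α).outEdges x = dj := by
        ext p
        simp only [Justification.outEdges, Justification.update, Set.mem_setOf_eq,
          eq_self_iff_true, if_true]
        constructor
        · rintro ⟨h1p, h2p⟩
          rw [← h1p] at h2p
          simpa using h2p
        · intro hp
          refine ⟨hfst p hp, ?_⟩
          rw [← hfst p hp]
          simpa using hp
      rw [hout, hHv]
      exact hwin
    · have hout : (J.update v dj α).outEdges x = J.outEdges x := by
        ext p
        simp only [Justification.outEdges, Justification.update, Set.mem_setOf_eq, if_neg hxv]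
      rw [hout]
      apply hJ
      obtain ⟨y, hy⟩ := hx
      simp only [Justification.update, if_neg hxv] at hy
      exact ⟨y, hy⟩
  · -- no new cycles
    rintro ⟨h1, h2⟩ ρ n ⟨hn, hpath, hend⟩
    have key : ∀ i < n, ρ i ≠ v := by
      by_contra hc
      push_neg at hc
      obtain ⟨i, hi, hiv⟩ := hc
      have hdj : (v, ρ (i + 1)) ∈ dj := by
        have h := hpath i hi
        simp only [Justification.update, hiv, eq_self_iff_true, if_true] at h
        exact h
      apply h2 (ρ (i + 1)) hdj
      -- show Reaches J.D (ρ (i+1)) v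
      by_cases hA : ∃ j, i < j ∧ j ≤ n ∧ ρ j = v
      · -- take the least such j
        have hj := Nat.find_spec hA
        obtain ⟨hij, hjn, hjv⟩ := hj
        have hseg : Relation.ReflTransGen J.D (ρ (i + 1)) (ρ (Nat.find hA)) := by
          apply seg_reaches (by omega)
          intro m hm hmj
          have hed := hpath m (by omega)
          have hmv : ρ m ≠ v := by
            intro hmv
            exact Nat.find_min hA hmj ⟨by omega, by omega, hmv⟩
          simpa only [Justification.update, if_neg hmv] using hed
        rwa [hjv] at hseg
      · push_neg at hA
        -- reach ρ n = ρ 0 first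
        have hseg1 : Relation.ReflTransGen J.D (ρ (i + 1)) (ρ n) := by
          apply seg_reaches (by omega)
          intro m hm hmn
          have hed := hpath m hmn
          have hmv : ρ m ≠ v := fun hmv => (hA m (by omega) (by omega)) hmv
          simpa only [Justification.update, if_neg hmv] using hed
        have hB : ∃ j, j ≤ i ∧ ρ j = v := ⟨i, le_refl i, hiv⟩
        have hj := Nat.find_spec hB
        obtain ⟨hji, hjv⟩ := hj
        have hseg2 : Relation.ReflTransGen J.D (ρ 0) (ρ (Nat.find hB)) := by
          apply seg_reaches (Nat.zero_le _)
          intro m hm hmj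
          have hed := hpath m (by omega)
          have hmv : ρ m ≠ v := by
            intro hmv
            exact Nat.find_min hB hmj ⟨by omega, hmv⟩
          simpa only [Justification.update, if_neg hmv] using hed
        rw [hend] at hseg1
        rw [hjv] at hseg2
        exact hseg1.trans hseg2
    refine ⟨hn, ?_, hend⟩
    intro i hi
    have hed := hpath i hi
    simpa only [Justification.update, if_neg (key i hi)] using hed
  · -- new cycles pass through v and use an edge of dj
    rintro ρ n ⟨hn, hpath, hend⟩ hnot
    have hnp : ¬ IsFinPath J.D ρ n := fun h => hnot ⟨hn, h, hend⟩
    simp only [IsFinPath, not_forall] at hnp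
    obtain ⟨i, hi, hbad⟩ := hnp
    have hed := hpath i hi
    have hiv : ρ i = v := by
      by_contra hiv
      simp only [Justification.update, if_neg hiv] at hed
      exact hbad hed
    simp only [Justification.update, hiv, eq_self_iff_true, if_true] at hed
    exact ⟨⟨i, hi, hiv⟩, ⟨i, hi, by rwa [hiv]⟩⟩

end ParityGame

end
end

section
/- Starting from the empty safe justification J⁰ = (V, ∅, H_d), any maximal sequence of executable Justify steps (where each step J^{i+1} = Justify(J^i, v, dj) for some node v justifiable with dj) is finite and terminates in a safe justification J^k in which every node is justified; moreover the hypothesis H^k of J^k is the winning function of the parity game PG, and σ_{J^k,0} and σ_{J^k,1} are winning strategies for players 0 and 1 on their respective winning sets. -/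
attribute [local instance] Classical.propDecidable

noncomputable section

namespace ParityGame

variable {V : Type*}

variable {G : ParityGame V}

/-- One `Justify` step: some node `v` is justifiable with some `dj`
(won by some player `α`) and `J'` is the result of the operation. -/
def JustifyStep (G : ParityGame V) (J J' : Justification G) : Prop :=
  ∃ (v : V) (dj : Set (V × V)) (α : Fin 2),
    J.Safe ∧ G.WinsDJ J.H v α dj ∧
    (if J.Justified v then J.jl v < J.jlDJ dj else J.jl v ≤ J.jlDJ dj) ∧
    J' = justify G J v dj α


section Lemmas

variable {V : Type*} {G : ParityGame V}

lemma enat_sInf_mem {S : Set ℕ∞} (h : S.Nonempty) : sInf S ∈ S := by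
  by_cases htop : ∃ n : ℕ, (n : ℕ∞) ∈ S
  · obtain ⟨n, hn⟩ := htop
    set T : Set ℕ := {m : ℕ | (m : ℕ∞) ∈ S} with hT
    have hTne : T.Nonempty := ⟨n, hn⟩
    have heq : sInf S = ((sInf T : ℕ) : ℕ∞) := by
      apply le_antisymm
      · exact sInf_le (Nat.sInf_mem hTne)
      · apply le_sInf
        intro b hb
        induction b using ENat.recTopCoe with
        | top => exact le_top
        | coe m => exact Nat.cast_le.2 (Nat.sInf_le hb)
    rw [heq]
    exact Nat.sInf_mem hTne
  · have hS : S = {⊤} := by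
      apply Set.eq_singleton_iff_nonempty_unique_mem.mpr
      refine ⟨h, fun x hx => ?_⟩
      induction x using ENat.recTopCoe with
      | top => rfl
      | coe m => exact absurd ⟨m, hx⟩ htop
    rw [hS]
    simp

lemma fin2_ne : ∀ {a b : Fin 2}, a ≠ b → a = b + 1 := by decide

namespace Justification

variable {J : Justification G}

lemma h_succ (hw : J.WeaklyWinning) {u w : V} (h : J.D u w) : J.H w = J.H u :=
  (hw u ⟨w, h⟩).2 (u, w) ⟨rfl, h⟩

lemma h_reach (hw : J.WeaklyWinning) {u w : V} (h : Reaches J.D u w) : J.H w = J.H u := by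
  induction h with
  | refl => rfl
  | tail _ hstep ih => rw [h_succ hw hstep, ih]

lemma jl_le_of_mem {u w : V} (h : w ∈ J.Par u) : J.jl u ≤ (G.pr w : ℕ∞) :=
  sInf_le ⟨w, h, rfl⟩

lemma le_jl {u : V} {c : ℕ∞} (h : ∀ w ∈ J.Par u, c ≤ (G.pr w : ℕ∞)) : c ≤ J.jl u := by
  rw [jl]
  apply le_sInf
  rintro b ⟨w, hw, rfl⟩
  exact h w hw

lemma jl_mono {u w : V} (h : Reaches J.D u w) : J.jl u ≤ J.jl w :=
  le_jl fun z hz => jl_le_of_mem ⟨Relation.ReflTransGen.trans h hz.1, hz.2⟩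

lemma self_mem_par {u : V} (h : ¬ J.Justified u) : u ∈ J.Par u :=
  ⟨Relation.ReflTransGen.refl, h⟩

lemma jl_eq_pr (h3 : ∀ x, (G.pr x : ℕ∞) ≤ J.jl x) {u : V} (h : ¬ J.Justified u) :
    J.jl u = (G.pr u : ℕ∞) :=
  le_antisymm (jl_le_of_mem (self_mem_par h)) (h3 u)

lemma jl_attained {u : V} (h : J.jl u ≠ ⊤) : ∃ w ∈ J.Par u, (G.pr w : ℕ∞) = J.jl u := by
  have hne : ((fun w => (G.pr w : ℕ∞)) '' J.Par u).Nonempty := by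
    by_contra hB
    rw [Set.not_nonempty_iff_eq_empty] at hB
    apply h
    rw [jl, hB, sInf_empty]
  have hmem := enat_sInf_mem hne
  obtain ⟨w, hw, heq⟩ := hmem
  exact ⟨w, hw, heq⟩

lemma jlDJ_le {dj : Set (V × V)} {p : V × V} (h : p ∈ dj) : J.jlDJ dj ≤ J.jl p.2 :=
  sInf_le ⟨p, h, rfl⟩

lemma le_jlDJ {dj : Set (V × V)} {c : ℕ∞} (h : ∀ p ∈ dj, c ≤ J.jl p.2) : c ≤ J.jlDJ dj := by
  rw [jlDJ]
  apply le_sInf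
  rintro b ⟨p, hp, rfl⟩
  exact h p hp

lemma jlDJ_attained {dj : Set (V × V)} (hne : dj.Nonempty) :
    ∃ p ∈ dj, J.jl p.2 = J.jlDJ dj := by
  have h : ((fun p : V × V => J.jl p.2) '' dj).Nonempty := hne.image _
  obtain ⟨p, hp, heq⟩ := enat_sInf_mem h
  exact ⟨p, hp, heq⟩

lemma jl_parity (hw : J.WeaklyWinning) (h2 : ∀ x, ¬ J.Justified x → J.H x = G.Hd x)
    {u : V} {m : ℕ} (h : J.jl u = (m : ℕ∞)) : Fin.ofNat 2 m = J.H u := by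
  obtain ⟨w, hwpar, heq⟩ := jl_attained (u := u) (by rw [h]; exact (ENat.coe_ne_top m))
  have hm : G.pr w = m := by
    rw [h] at heq
    exact_mod_cast heq
  have hH : J.H w = G.Hd w := h2 w hwpar.2
  have hcon : J.H w = J.H u := h_reach hw hwpar.1
  rw [← hm, ← hcon, hH]
  rfl

end Justification

lemma dj_edge {v : V} {α : Fin 2} {dj : Set (V × V)} (hdj : G.IsDJ v α dj) :
    ∀ p ∈ dj, p.1 = v ∧ G.E v p.2 := by
  intro p hp
  by_cases ho : G.owner v = α
  · obtain ⟨w, hEw, rfl⟩ := hdj.1 ho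
    rw [Set.mem_singleton_iff] at hp
    subst hp
    exact ⟨rfl, hEw⟩
  · rw [hdj.2 ho] at hp
    exact hp

lemma dj_nonempty {v : V} {α : Fin 2} {dj : Set (V × V)} (hdj : G.IsDJ v α dj) :
    dj.Nonempty := by
  obtain ⟨w, hw⟩ := G.exists_succ v
  by_cases ho : G.owner v = α
  · obtain ⟨w', hE, rfl⟩ := hdj.1 ho
    exact ⟨(v, w'), rfl⟩
  · rw [hdj.2 ho]
    exact ⟨(v, w), ⟨rfl, hw⟩⟩

lemma IsFinPath.reaches {R : V → V → Prop} {ρ : ℕ → V} {n : ℕ} (h : IsFinPath R ρ n)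
    {a b : ℕ} (hab : a ≤ b) (hb : b ≤ n) : Reaches R (ρ a) (ρ b) := by
  induction b with
  | zero =>
    obtain rfl : a = 0 := Nat.le_zero.mp hab
    exact Relation.ReflTransGen.refl
  | succ m ih =>
    rcases Nat.lt_or_ge a (m + 1) with hlt | hge
    · exact (ih (Nat.lt_succ_iff.mp hlt) (le_trans (Nat.le_succ m) hb)).tail (h m hb)
    · obtain rfl : a = m + 1 := le_antisymm hab hge
      exact Relation.ReflTransGen.refl

lemma IsCycle.reaches {R : V → V → Prop} {ρ : ℕ → V} {n : ℕ} (h : IsCycle R ρ n)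
    {a b : ℕ} (ha : a ≤ n) (hb : b ≤ n) : Reaches R (ρ a) (ρ b) := by
  rcases le_or_gt a b with hab | hba
  · exact h.2.1.reaches hab hb
  · have h1 : Reaches R (ρ a) (ρ n) := h.2.1.reaches ha le_rfl
    have h2 : Reaches R (ρ n) (ρ b) := by
      rw [h.2.2]
      exact h.2.1.reaches (Nat.zero_le b) hb
    exact h1.trans h2

lemma IsInfPath.reaches_zero {R : V → V → Prop} {π : ℕ → V} (h : IsInfPath R π) (i : ℕ) :
    Reaches R (π 0) (π i) := by
  induction i with
  | zero => exact Relation.ReflTransGen.refl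
  | succ m ih => exact ih.tail (h m)

end Lemmas


section Cycles

variable {V : Type*} {G : ParityGame V}

lemma exists_recurrent [Fintype V] (π : ℕ → V) :
    ∃ N : ℕ, ∀ i, N ≤ i → {j | π j = π i}.Infinite := by
  classical
  have hfin : (⋃ v ∈ {v : V | {j | π j = v}.Finite}, {j | π j = v}).Finite :=
    Set.Finite.biUnion (Set.toFinite _) (fun v hv => hv)
  obtain ⟨N, hN⟩ := hfin.bddAbove
  refine ⟨N + 1, fun i hi => ?_⟩
  by_contra hinf
  have hmem : i ∈ ⋃ v ∈ {v : V | {j | π j = v}.Finite}, {j | π j = v} :=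
    Set.mem_biUnion (Set.not_infinite.mp hinf) rfl
  have := hN hmem
  omega

namespace Justification

variable {J : Justification G}

/-- The maximal priority on a cycle. -/
def cycMax (G : ParityGame V) (ρ : ℕ → V) (n : ℕ) : ℕ :=
  (Finset.range (n + 1)).sup fun k => G.pr (ρ k)

lemma cycle_good (hwin : J.Winning) {ρ : ℕ → V} {n : ℕ} (hc : IsCycle J.D ρ n) :
    Fin.ofNat 2 (cycMax G ρ n : ℕ) = J.H (ρ 0) := by
  have hn := hc.1
  set π : ℕ → V := fun i => ρ (i % n) with hπdef
  have hπ : IsInfPath J.D π := by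
    intro i
    have hr : i % n < n := Nat.mod_lt _ hn
    by_cases h2 : i % n + 1 < n
    · have he : (i + 1) % n = i % n + 1 := by
        rw [← Nat.mod_add_mod]
        exact Nat.mod_eq_of_lt h2
      show J.D (ρ (i % n)) (ρ ((i + 1) % n))
      rw [he]
      exact hc.2.1 _ hr
    · have he : i % n + 1 = n := by omega
      have h0 : (i + 1) % n = 0 := by
        rw [← Nat.mod_add_mod, he, Nat.mod_self]
      show J.D (ρ (i % n)) (ρ ((i + 1) % n))
      rw [h0, ← hc.2.2]
      have hstep := hc.2.1 (i % n) hr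
      rwa [he] at hstep
  obtain ⟨p, hpinf, hpmax, hppar⟩ := hwin.2 π hπ
  have hπ0 : π 0 = ρ 0 := by simp [hπdef]
  obtain ⟨k₀, hk₀, hk₀eq⟩ := Finset.exists_mem_eq_sup (Finset.range (n + 1))
    ⟨0, Finset.mem_range.2 (by omega)⟩ (fun k => G.pr (ρ k))
  have hk₀lt : k₀ < n + 1 := Finset.mem_range.mp hk₀
  have hk₀n : G.pr (ρ (k₀ % n)) = G.pr (ρ k₀) := by
    rcases Nat.lt_or_ge k₀ n with h | h
    · rw [Nat.mod_eq_of_lt h]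
    · have hkn : k₀ = n := by omega
      subst hkn
      rw [Nat.mod_self, hc.2.2]
  have hsle : cycMax G ρ n ≤ p := by
    have hinf : {i | G.pr (π i) = G.pr (ρ k₀)}.Infinite := by
      apply Set.infinite_of_injective_forall_mem (f := fun j : ℕ => k₀ % n + j * n)
      · intro a b hab
        simp only at hab
        have : a * n = b * n := by omega
        exact Nat.eq_of_mul_eq_mul_right hn this
      · intro j
        show G.pr (ρ ((k₀ % n + j * n) % n)) = G.pr (ρ k₀)
        rw [Nat.add_mul_mod_self_right, Nat.mod_mod_of_dvd _ dvd_rfl]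
        exact hk₀n
    have := hpmax _ hinf
    rw [cycMax, hk₀eq]
    exact this
  have hple : p ≤ cycMax G ρ n := by
    obtain ⟨i, hi⟩ := hpinf.nonempty
    have : p = G.pr (ρ (i % n)) := hi.symm
    have hx : i % n < n + 1 := by have := Nat.mod_lt i hn; omega
    rw [this, cycMax]
    exact Finset.le_sup (f := fun k => G.pr (ρ k)) (Finset.mem_range.2 hx)
  have hpeq : cycMax G ρ n = p := le_antisymm hsle hple
  rw [hpeq, hppar, hπ0]

lemma winning_of_cycles [Fintype V] (hw : J.WeaklyWinning)
    (hcyc : ∀ (ρ : ℕ → V) (n : ℕ), IsCycle J.D ρ n →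
      Fin.ofNat 2 (cycMax G ρ n : ℕ) = J.H (ρ 0)) :
    J.Winning := by
  refine ⟨hw, fun π hπ => ?_⟩
  obtain ⟨N, hN⟩ := exists_recurrent π
  set I : Set V := {w | {j | π j = w}.Infinite} with hI
  have hIne : (π N) ∈ I := hN N le_rfl
  obtain ⟨u, huI, humax⟩ := Set.exists_max_image I G.pr (Set.toFinite I) ⟨_, hIne⟩
  have huInf : {j | π j = u}.Infinite := huI
  obtain ⟨i, hiu, hiN⟩ := huInf.exists_gt N
  obtain ⟨j, hju, hij⟩ := huInf.exists_gt i
  set n := j - i with hn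
  set ρ : ℕ → V := fun k => π (i + k) with hρ
  have hcy : IsCycle J.D ρ n := by
    refine ⟨by omega, fun k hk => ?_, ?_⟩
    · exact hπ (i + k)
    · show π (i + (j - i)) = π (i + 0)
      have h1 : i + (j - i) = j := by omega
      rw [h1, Nat.add_zero, hju, hiu]
  have hmax := hcyc ρ n hcy
  have hsup : cycMax G ρ n = G.pr u := by
    rw [cycMax]
    apply le_antisymm
    · apply Finset.sup_le
      intro k _
      apply humax
      have hNik : N ≤ i + k := by omega
      exact hN (i + k) hNik
    · have h0 : ρ 0 = u := by
        show π (i + 0) = u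
        rw [Nat.add_zero]
        exact hiu
      have hx : (0 : ℕ) < n + 1 := Nat.succ_pos n
      calc G.pr u = G.pr (ρ 0) := by rw [h0]
        _ ≤ _ := Finset.le_sup (f := fun k => G.pr (ρ k)) (Finset.mem_range.2 hx)
  refine ⟨G.pr u, ?_, ?_, ?_⟩
  · apply Set.Infinite.mono ?_ huInf
    intro j hj
    show G.pr (π j) = G.pr u
    rw [Set.mem_setOf_eq.mp hj]
  · intro q hq
    obtain ⟨m, hm, hmN⟩ := hq.exists_gt N
    have hmem : π m ∈ I := hN m (by omega)
    have : q = G.pr (π m) := hm.symm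
    rw [this]
    exact humax _ hmem
  · have hH : J.H (π i) = J.H (π 0) := h_reach hw (hπ.reaches_zero i)
    have h0 : ρ 0 = π i := by
      show π (i + 0) = π i
      rw [Nat.add_zero]
    rw [← hsup, hmax, h0, hH]

end Justification

end Cycles


section JustifyStructure

variable {V : Type*} {G : ParityGame V}

namespace Justification

/-- The set of nodes reset by `Justify(J, v, dj)` with winner `α`. -/
def Rset (J : Justification G) (v : V) (α : Fin 2) : Set V :=
  if J.H v = α then ∅ else {w | Reaches J.D w v}

variable {J : Justification G} {v : V} {dj : Set (V × V)} {α : Fin 2}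

lemma mem_Rset_iff {x : V} : x ∈ J.Rset v α ↔ (J.H v ≠ α ∧ Reaches J.D x v) := by
  rw [Rset]
  by_cases hv : J.H v = α <;> simp [hv]

lemma v_mem_Rset (hv : J.H v ≠ α) : v ∈ J.Rset v α :=
  mem_Rset_iff.2 ⟨hv, Relation.ReflTransGen.refl⟩

lemma Rset_closed {x y : V} (hD : J.D x y) (hy : y ∈ J.Rset v α) : x ∈ J.Rset v α := by
  rw [mem_Rset_iff] at hy ⊢
  exact ⟨hy.1, Relation.ReflTransGen.head hD hy.2⟩

lemma ne_v_of_not_mem_Rset (hv : J.H v ≠ α) {x : V} (hx : x ∉ J.Rset v α) : x ≠ v :=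
  fun h => hx (by rw [h]; exact v_mem_Rset hv)

lemma justify_D {x y : V} :
    (justify G J v dj α).D x y ↔
      ((x = v ∧ (x, y) ∈ dj) ∨ (x ≠ v ∧ x ∉ J.Rset v α ∧ J.D x y)) := by
  unfold justify
  by_cases hv : J.H v = α
  · rw [if_pos hv]
    show (if x = v then (x, y) ∈ dj else J.D x y) ↔ _
    have hR : x ∉ J.Rset v α := by rw [Rset, if_pos hv]; exact Set.notMem_empty x
    by_cases hxv : x = v <;> simp [hxv, hR]
  · rw [if_neg hv]
    show (if x = v then (x, y) ∈ dj else if x ∈ {w | Reaches J.D w v} then False else J.D x y) ↔ _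
    have hR : J.Rset v α = {w | Reaches J.D w v} := by rw [Rset, if_neg hv]
    rw [hR]
    by_cases hxv : x = v
    · simp [hxv]
    · by_cases hxR : x ∈ {w | Reaches J.D w v} <;> simp [hxv, hxR]

lemma justify_H {x : V} :
    (justify G J v dj α).H x =
      if x = v then α else if x ∈ J.Rset v α then G.Hd x else J.H x := by
  unfold justify
  by_cases hv : J.H v = α
  · rw [if_pos hv]
    show (if x = v then α else J.H x) = _
    have hR : x ∉ J.Rset v α := by rw [Rset, if_pos hv]; exact Set.notMem_empty x
    by_cases hxv : x = v <;> simp [hxv, hR]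
  · rw [if_neg hv]
    show (if x = v then α else if x ∈ {w | Reaches J.D w v} then G.Hd x else J.H x) = _
    have hR : J.Rset v α = {w | Reaches J.D w v} := by rw [Rset, if_neg hv]
    rw [hR]

lemma justify_justified (hwin : G.WinsDJ J.H v α dj) {x : V} :
    (justify G J v dj α).Justified x ↔
      (x = v ∨ (x ∉ J.Rset v α ∧ x ≠ v ∧ J.Justified x)) := by
  constructor
  · rintro ⟨y, hy⟩
    rw [justify_D] at hy
    rcases hy with ⟨rfl, _⟩ | ⟨hne, hR, hD⟩
    · exact Or.inl rfl
    · exact Or.inr ⟨hR, hne, y, hD⟩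
  · rintro (rfl | ⟨hR, hne, y, hy⟩)
    · obtain ⟨p, hp⟩ := dj_nonempty hwin.1
      have h1 := (dj_edge hwin.1 p hp).1
      refine ⟨p.2, ?_⟩
      rw [justify_D]
      left
      refine ⟨rfl, ?_⟩
      have hpv : (x, p.2) = p := by
        obtain ⟨a, b⟩ := p
        simp only at h1
        rw [h1]
      rw [hpv]
      exact hp
    · exact ⟨y, justify_D.2 (Or.inr ⟨hne, hR, hy⟩)⟩

lemma justify_H_eq {x : V} (hR : x ∉ J.Rset v α) (hx : x ≠ v) :
    (justify G J v dj α).H x = J.H x := by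
  rw [justify_H, if_neg hx, if_neg hR]

lemma justify_H_v : (justify G J v dj α).H v = α := by
  rw [justify_H, if_pos rfl]

lemma target_notmem_Rset (hw : J.WeaklyWinning) (hwin : G.WinsDJ J.H v α dj) :
    ∀ p ∈ dj, p.2 ∉ J.Rset v α := by
  intro p hp hmem
  rw [mem_Rset_iff] at hmem
  have hα : J.H p.2 = α := hwin.2 p hp
  have := h_reach hw hmem.2
  exact hmem.1 (this ▸ hα)

/-- In the reset case, paths in the new justification starting outside the
reset set are old paths avoiding the reset set. -/
lemma reset_reach_new_old (hv : J.H v ≠ α) {x w : V}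
    (h : Reaches (justify G J v dj α).D x w) (hx : x ∉ J.Rset v α) :
    Reaches J.D x w ∧ w ∉ J.Rset v α := by
  induction h using Relation.ReflTransGen.head_induction_on with
  | refl => exact ⟨Relation.ReflTransGen.refl, hx⟩
  | head h' hrest ih =>
    rename_i a c
    rw [justify_D] at h'
    rcases h' with ⟨rfl, _⟩ | ⟨hav, haR, hD⟩
    · exact absurd (v_mem_Rset hv) hx
    · have hcR : c ∉ J.Rset v α := fun hc => hx (Rset_closed hD hc)
      obtain ⟨hr, hw⟩ := ih hcR
      exact ⟨Relation.ReflTransGen.head hD hr, hw⟩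

/-- In the reset case, old paths starting outside the reset set survive. -/
lemma reset_reach_old_new (hv : J.H v ≠ α) {x w : V}
    (h : Reaches J.D x w) (hx : x ∉ J.Rset v α) :
    Reaches (justify G J v dj α).D x w ∧ w ∉ J.Rset v α := by
  induction h using Relation.ReflTransGen.head_induction_on with
  | refl => exact ⟨Relation.ReflTransGen.refl, hx⟩
  | head h' hrest ih =>
    rename_i a c
    have hcR : c ∉ J.Rset v α := fun hc => hx (Rset_closed h' hc)
    obtain ⟨hr, hw⟩ := ih hcR
    refine ⟨Relation.ReflTransGen.head ?_ hr, hw⟩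
    rw [justify_D]
    exact Or.inr ⟨ne_v_of_not_mem_Rset hv hx, hx, h'⟩

lemma reset_justified_eq (hv : J.H v ≠ α) {x : V} (hx : x ∉ J.Rset v α) :
    ((justify G J v dj α).Justified x ↔ J.Justified x) := by
  have hxv := ne_v_of_not_mem_Rset hv hx
  constructor
  · rintro ⟨y, hy⟩
    rw [justify_D] at hy
    rcases hy with ⟨h1, _⟩ | ⟨_, _, hD⟩
    · exact absurd h1 hxv
    · exact ⟨y, hD⟩
  · rintro ⟨y, hy⟩
    exact ⟨y, justify_D.2 (Or.inr ⟨hxv, hx, hy⟩)⟩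

lemma reset_par_eq (hv : J.H v ≠ α) {x : V} (hx : x ∉ J.Rset v α) :
    (justify G J v dj α).Par x = J.Par x := by
  ext w
  constructor
  · rintro ⟨hre, hunj⟩
    obtain ⟨hr, hwR⟩ := reset_reach_new_old hv hre hx
    exact ⟨hr, fun hj => hunj ((reset_justified_eq hv hwR).2 hj)⟩
  · rintro ⟨hre, hunj⟩
    have hwR : w ∉ J.Rset v α := by
      intro hw
      rw [mem_Rset_iff] at hw
      rcases Relation.ReflTransGen.cases_head hw.2 with h0 | ⟨c, hc, _⟩
      · subst h0
        exact hx (mem_Rset_iff.2 ⟨hv, hre⟩)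
      · exact hunj ⟨c, hc⟩
    obtain ⟨hr, _⟩ := reset_reach_old_new (dj := dj) (α := α) hv hre hx
    exact ⟨hr, fun hj => hunj ((reset_justified_eq hv hwR).1 hj)⟩

lemma reset_jl_eq (hv : J.H v ≠ α) {x : V} (hx : x ∉ J.Rset v α) :
    (justify G J v dj α).jl x = J.jl x := by
  rw [jl, jl, reset_par_eq hv hx]

/-- In the no-reset case, reaching `v` in the new graph implies reaching it
in the old graph. -/
lemma noreset_reach_v (hv : J.H v = α) {x : V}
    (h : Reaches (justify G J v dj α).D x v) : x = v ∨ Reaches J.D x v := by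
  induction h using Relation.ReflTransGen.head_induction_on with
  | refl => exact Or.inl rfl
  | head h' hrest ih =>
    rename_i a c
    rw [justify_D] at h'
    rcases h' with ⟨rfl, _⟩ | ⟨hav, _, hD⟩
    · exact Or.inl rfl
    · rcases ih with rfl | hr
      · exact Or.inr (Relation.ReflTransGen.single hD)
      · exact Or.inr (Relation.ReflTransGen.head hD hr)

/-- Structure of parameters in the new justification, no-reset case. -/
lemma noreset_par_struct (hv : J.H v = α) (hwin : G.WinsDJ J.H v α dj) {x w : V}
    (h : Reaches (justify G J v dj α).D x w) (hunj : ¬ (justify G J v dj α).Justified w) :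
    (w ∈ J.Par x ∧ w ≠ v ∧ x ≠ v) ∨ (Reaches J.D x v ∧ J.jlDJ dj ≤ (G.pr w : ℕ∞)) := by
  induction h using Relation.ReflTransGen.head_induction_on with
  | refl =>
    have hwv : w ≠ v := by
      rintro rfl
      exact hunj ((justify_justified hwin).2 (Or.inl rfl))
    have hwunj : ¬ J.Justified w := by
      intro hj
      apply hunj
      refine (justify_justified hwin).2 (Or.inr ⟨?_, hwv, hj⟩)
      rw [Rset, if_pos hv]
      exact Set.notMem_empty w
    exact Or.inl ⟨⟨Relation.ReflTransGen.refl, hwunj⟩, hwv, hwv⟩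
  | head h' hrest ih =>
    rename_i a c
    rw [justify_D] at h'
    rcases h' with ⟨rfl, hdj⟩ | ⟨hav, _, hD⟩
    · refine Or.inr ⟨Relation.ReflTransGen.refl, ?_⟩
      rcases ih with ⟨hpar, _, _⟩ | ⟨_, hb⟩
      · exact le_trans (jlDJ_le hdj) (jl_le_of_mem hpar)
      · exact hb
    · rcases ih with ⟨hpar, hwv, _⟩ | ⟨hr, hb⟩
      · exact Or.inl ⟨⟨Relation.ReflTransGen.head hD hpar.1, hpar.2⟩, hwv, hav⟩
      · exact Or.inr ⟨Relation.ReflTransGen.head hD hr, hb⟩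

end Justification

end JustifyStructure


section JustifySafe

variable {V : Type*} {G : ParityGame V}

namespace Justification

variable {J : Justification G} {v : V} {dj : Set (V × V)} {α : Fin 2}

lemma hlvl_le (hlvl : if J.Justified v then J.jl v < J.jlDJ dj else J.jl v ≤ J.jlDJ dj) :
    J.jl v ≤ J.jlDJ dj := by
  by_cases h : J.Justified v
  · rw [if_pos h] at hlvl; exact le_of_lt hlvl
  · rw [if_neg h] at hlvl; exact hlvl

lemma justify_jlDJ_le_jl_v (hw : J.WeaklyWinning) (hwin : G.WinsDJ J.H v α dj) :
    J.jlDJ dj ≤ (justify G J v dj α).jl v := by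
  apply le_jl
  rintro w ⟨hre, hunj⟩
  by_cases hv : J.H v = α
  · rcases noreset_par_struct hv hwin hre hunj with ⟨_, _, hvv⟩ | ⟨_, hb⟩
    · exact absurd rfl hvv
    · exact hb
  · rcases Relation.ReflTransGen.cases_head hre with h0 | ⟨c, hcd, hrest⟩
    · exfalso
      subst h0
      exact hunj ((justify_justified hwin).2 (Or.inl rfl))
    · rw [justify_D] at hcd
      rcases hcd with ⟨_, hdj⟩ | ⟨hvv, _, _⟩
      · have hcR : c ∉ J.Rset v α := target_notmem_Rset hw hwin (v, c) hdj
        obtain ⟨hr, hwR⟩ := reset_reach_new_old hv hrest hcR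
        have hwunj : ¬ J.Justified w := fun hj => hunj ((reset_justified_eq hv hwR).2 hj)
        calc J.jlDJ dj ≤ J.jl c := jlDJ_le hdj
          _ ≤ _ := jl_le_of_mem ⟨hr, hwunj⟩
      · exact absurd rfl hvv

lemma justify_jl_ge (hwin : G.WinsDJ J.H v α dj) (hle : J.jl v ≤ J.jlDJ dj)
    {x : V} (hR : x ∉ J.Rset v α) (hx : x ≠ v) :
    J.jl x ≤ (justify G J v dj α).jl x := by
  by_cases hv : J.H v = α
  · apply le_jl
    rintro w ⟨hre, hunj⟩
    rcases noreset_par_struct hv hwin hre hunj with ⟨hpar, _, _⟩ | ⟨hr, hb⟩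
    · exact jl_le_of_mem hpar
    · calc J.jl x ≤ J.jl v := jl_mono hr
        _ ≤ J.jlDJ dj := hle
        _ ≤ _ := hb
  · rw [reset_jl_eq hv hR]

lemma justify_safe3 (hS : J.Safe) (hwin : G.WinsDJ J.H v α dj)
    (hlvl : if J.Justified v then J.jl v < J.jlDJ dj else J.jl v ≤ J.jlDJ dj) :
    ∀ x, (G.pr x : ℕ∞) ≤ (justify G J v dj α).jl x := by
  intro x
  by_cases hxv : x = v
  · subst hxv
    calc (G.pr x : ℕ∞) ≤ J.jl x := hS.2.2 x
      _ ≤ J.jlDJ dj := hlvl_le hlvl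
      _ ≤ _ := justify_jlDJ_le_jl_v hS.1.1 hwin
  · by_cases hR : x ∈ J.Rset v α
    · apply le_jl
      rintro w ⟨hre, _⟩
      rcases Relation.ReflTransGen.cases_head hre with h0 | ⟨c, hcd, _⟩
      · rw [← h0]
      · exfalso
        rw [justify_D] at hcd
        rcases hcd with ⟨h1, _⟩ | ⟨_, h2, _⟩
        · exact hxv h1
        · exact h2 hR
    · calc (G.pr x : ℕ∞) ≤ J.jl x := hS.2.2 x
        _ ≤ _ := justify_jl_ge hwin (hlvl_le hlvl) hR hxv

lemma justify_safe2 (h2 : ∀ x, ¬ J.Justified x → J.H x = G.Hd x)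
    (hwin : G.WinsDJ J.H v α dj) :
    ∀ x, ¬ (justify G J v dj α).Justified x → (justify G J v dj α).H x = G.Hd x := by
  intro x hunj
  have hxv : x ≠ v := by
    rintro rfl
    exact hunj ((justify_justified hwin).2 (Or.inl rfl))
  rw [justify_H, if_neg hxv]
  by_cases hR : x ∈ J.Rset v α
  · rw [if_pos hR]
  · rw [if_neg hR]
    apply h2
    intro hj
    exact hunj ((justify_justified hwin).2 (Or.inr ⟨hR, hxv, hj⟩))

lemma justify_outEdges_v (hwin : G.WinsDJ J.H v α dj) :
    (justify G J v dj α).outEdges v = dj := by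
  ext p
  constructor
  · rintro ⟨h1, hD⟩
    rw [justify_D] at hD
    rcases hD with ⟨_, hdj⟩ | ⟨h, _, _⟩
    · have hpe : (v, p.2) = p := by
        obtain ⟨a, b⟩ := p
        simp only at h1
        rw [h1]
      rwa [hpe] at hdj
    · exact absurd rfl h
  · intro hp
    have h1 := (dj_edge hwin.1 p hp).1
    refine ⟨h1, ?_⟩
    rw [justify_D]
    left
    refine ⟨rfl, ?_⟩
    have hpe : (v, p.2) = p := by
      obtain ⟨a, b⟩ := p
      simp only at h1
      rw [h1]
    rwa [hpe]

lemma justify_outEdges_other {x : V} (hxv : x ≠ v) (hR : x ∉ J.Rset v α) :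
    (justify G J v dj α).outEdges x = J.outEdges x := by
  ext p
  constructor
  · rintro ⟨h1, hD⟩
    rw [justify_D] at hD
    rcases hD with ⟨h0, _⟩ | ⟨_, _, hD'⟩
    · exact absurd h0 hxv
    · exact ⟨h1, hD'⟩
  · rintro ⟨h1, hD⟩
    exact ⟨h1, justify_D.2 (Or.inr ⟨hxv, hR, hD⟩)⟩

lemma justify_weakly (hS : J.Safe) (hwin : G.WinsDJ J.H v α dj) :
    (justify G J v dj α).WeaklyWinning := by
  intro u hu
  rcases (justify_justified hwin).1 hu with huv | ⟨hR, huv, hjust⟩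
  · subst huv
    rw [justify_outEdges_v hwin, justify_H_v]
    refine ⟨hwin.1, ?_⟩
    intro p hp
    by_cases hpv : p.2 = u
    · rw [hpv, justify_H_v]
    · rw [justify_H_eq (target_notmem_Rset hS.1.1 hwin p hp) hpv]
      exact hwin.2 p hp
  · rw [justify_outEdges_other huv hR, justify_H_eq hR huv]
    obtain ⟨hdj, htar⟩ := hS.1.1 u hjust
    refine ⟨hdj, ?_⟩
    intro p hp
    have hD : J.D u p.2 := hp.2
    by_cases hv : J.H v = α
    · by_cases hpv : p.2 = v
      · have hth := htar p hp
        rw [hpv] at hth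
        rw [hpv, justify_H_v, ← hth, hv]
      · have hpR : p.2 ∉ J.Rset v α := by
          rw [Rset, if_pos hv]
          exact Set.notMem_empty _
        rw [justify_H_eq hpR hpv]
        exact htar p hp
    · have hpR : p.2 ∉ J.Rset v α := fun hmem => hR (Rset_closed hD hmem)
      have hpv : p.2 ≠ v := ne_v_of_not_mem_Rset hv hpR
      rw [justify_H_eq hpR hpv]
      exact htar p hp

lemma justify_winning [Fintype V] (hS : J.Safe) (hwin : G.WinsDJ J.H v α dj)
    (hlvl : if J.Justified v then J.jl v < J.jlDJ dj else J.jl v ≤ J.jlDJ dj) :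
    (justify G J v dj α).Winning := by
  apply winning_of_cycles (justify_weakly hS hwin)
  intro ρ n hc
  have hn := hc.1
  have hjustified : ∀ k, k ≤ n → (justify G J v dj α).Justified (ρ k) := by
    intro k hk
    rcases Nat.lt_or_ge k n with h | h
    · exact ⟨ρ (k + 1), hc.2.1 k h⟩
    · have hkn : k = n := by omega
      subst hkn
      rw [hc.2.2]
      exact ⟨ρ 1, hc.2.1 0 hn⟩
  by_cases hB : ∃ k₀, k₀ < n ∧ ρ k₀ = v
  · obtain ⟨k₀, hk₀n, hk₀v⟩ := hB
    by_cases hv : J.H v = α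
    · by_cases hJv : J.Justified v
      · exfalso
        have hedge : (justify G J v dj α).D v (ρ (k₀ + 1)) := by
          have he0 := hc.2.1 k₀ hk₀n
          rwa [hk₀v] at he0
        rw [justify_D] at hedge
        rcases hedge with ⟨_, hdj⟩ | ⟨h, _, _⟩
        swap
        · exact h rfl
        have hreach : Reaches (justify G J v dj α).D (ρ (k₀ + 1)) v := by
          have hr0 : Reaches (justify G J v dj α).D (ρ (k₀ + 1)) (ρ k₀) :=
            hc.reaches (by omega) (by omega)
          rwa [hk₀v] at hr0
        have hlt : J.jl v < J.jlDJ dj := by rw [if_pos hJv] at hlvl; exact hlvl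
        rcases noreset_reach_v hv hreach with h0 | hr
        · have hh := jlDJ_le (J := J) hdj
          rw [h0] at hh
          exact absurd (lt_of_lt_of_le hlt hh) (lt_irrefl _)
        · have h1 := jlDJ_le (J := J) hdj
          have h2 : J.jl (ρ (k₀ + 1)) ≤ J.jl v := jl_mono hr
          exact absurd (lt_of_lt_of_le hlt (le_trans h1 h2)) (lt_irrefl _)
      · have hHv : J.H v = G.Hd v := hS.2.1 v hJv
        have hje : ∀ k, k ≤ n → G.pr (ρ k) ≤ G.pr v := by
          intro k hk
          have hreach : Reaches (justify G J v dj α).D (ρ k) v := by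
            have hr0 : Reaches (justify G J v dj α).D (ρ k) (ρ k₀) :=
              hc.reaches hk (by omega)
            rwa [hk₀v] at hr0
          rcases noreset_reach_v hv hreach with h0 | hr
          · rw [h0]
          · have hvpar : v ∈ J.Par (ρ k) := ⟨hr, hJv⟩
            have h1 : (G.pr (ρ k) : ℕ∞) ≤ J.jl (ρ k) := hS.2.2 _
            have h2 := jl_le_of_mem hvpar
            exact_mod_cast le_trans h1 h2
        have hmax : cycMax G ρ n = G.pr v := by
          rw [cycMax]
          apply le_antisymm
          · apply Finset.sup_le
            intro k hk
            have hklt := Finset.mem_range.mp hk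
            exact hje k (by omega)
          · calc G.pr v = G.pr (ρ k₀) := by rw [hk₀v]
              _ ≤ _ := Finset.le_sup (f := fun k => G.pr (ρ k))
                  (Finset.mem_range.2 (by omega))
        have hH0 : (justify G J v dj α).H (ρ 0) = α := by
          have hreach : Reaches (justify G J v dj α).D (ρ 0) v := by
            have hr0 : Reaches (justify G J v dj α).D (ρ 0) (ρ k₀) :=
              hc.reaches (Nat.zero_le n) (by omega)
            rwa [hk₀v] at hr0
          have hcst := h_reach (justify_weakly hS hwin) hreach
          rw [justify_H_v] at hcst
          exact hcst.symm
        rw [hmax, hH0]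
        show Fin.ofNat 2 (G.pr v) = α
        rw [← hv, hHv]
        rfl
    · exfalso
      obtain ⟨x, hxlt, hxv⟩ : ∃ x, x < n ∧ ρ (x + 1) = v := by
        rcases Nat.eq_zero_or_pos k₀ with h0 | hpos
        · refine ⟨n - 1, by omega, ?_⟩
          have hsn : n - 1 + 1 = n := by omega
          rw [hsn, hc.2.2]
          exact h0 ▸ hk₀v
        · exact ⟨k₀ - 1, by omega, by rw [show k₀ - 1 + 1 = k₀ by omega]; exact hk₀v⟩
      have hedge : (justify G J v dj α).D (ρ x) v := by
        have he0 := hc.2.1 x hxlt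
        rwa [hxv] at he0
      rw [justify_D] at hedge
      rcases hedge with ⟨hxv', hdj⟩ | ⟨hne, hR, hD⟩
      · exact hv (hwin.2 _ hdj)
      · exact hR (mem_Rset_iff.2 ⟨hv, Relation.ReflTransGen.single hD⟩)
  · push_neg at hB
    have hnotv : ∀ k, k ≤ n → ρ k ≠ v := by
      intro k hk
      rcases Nat.lt_or_ge k n with h | h
      · exact hB k h
      · have hkn : k = n := by omega
        subst hkn
        rw [hc.2.2]
        exact hB 0 hn
    have hnotR : ∀ k, k ≤ n → ρ k ∉ J.Rset v α := by
      intro k hk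
      rcases (justify_justified hwin).1 (hjustified k hk) with h0 | ⟨hR, _, _⟩
      · exact absurd h0 (hnotv k hk)
      · exact hR
    have hold : IsCycle J.D ρ n := by
      refine ⟨hn, ?_, hc.2.2⟩
      intro k hk
      have hedge := hc.2.1 k hk
      rw [justify_D] at hedge
      rcases hedge with ⟨h0, _⟩ | ⟨_, _, hD⟩
      · exact absurd h0 (hnotv k (le_of_lt hk))
      · exact hD
    have hcg := cycle_good hS.1 hold
    rw [hcg]
    exact (justify_H_eq (hnotR 0 (Nat.zero_le n)) (hnotv 0 (Nat.zero_le n))).symm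

theorem justify_safe [Fintype V] (hS : J.Safe) (hwin : G.WinsDJ J.H v α dj)
    (hlvl : if J.Justified v then J.jl v < J.jlDJ dj else J.jl v ≤ J.jlDJ dj) :
    (justify G J v dj α).Safe :=
  ⟨justify_winning hS hwin hlvl, justify_safe2 hS.2.1 hwin, justify_safe3 hS hwin hlvl⟩

end Justification

end JustifySafe


section Measure

variable {V : Type*} {G : ParityGame V} [Fintype V]

namespace Justification

/-- The set of priorities of the game below a given level. -/
def rnkSet (G : ParityGame V) (x : ℕ∞) : Set ℕ :=
  {p : ℕ | (∃ z : V, G.pr z = p) ∧ (p : ℕ∞) ≤ x}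

lemma rnkSet_finite [Fintype V] (x : ℕ∞) : (rnkSet G x).Finite :=
  (Set.finite_range G.pr).subset (fun p hp => hp.1)

lemma rnkSet_mono {x y : ℕ∞} (h : x ≤ y) : rnkSet G x ⊆ rnkSet G y :=
  fun p hp => ⟨hp.1, le_trans hp.2 h⟩

/-- The rank of a justification level among the priorities of the game. -/
def rnk (G : ParityGame V) [Fintype V] (x : ℕ∞) : ℕ :=
  (rnkSet G x).ncard + (if x = ⊤ then 1 else 0)

lemma rnk_mono {x y : ℕ∞} (h : x ≤ y) : rnk G x ≤ rnk G y := by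
  unfold rnk
  apply Nat.add_le_add
  · exact Set.ncard_le_ncard (rnkSet_mono h) (rnkSet_finite y)
  · by_cases hx : x = ⊤
    · have hy : y = ⊤ := by rw [hx] at h; exact top_le_iff.mp h
      rw [hx, hy]
    · rw [if_neg hx]
      exact Nat.zero_le _

lemma rnk_strict {x y : ℕ∞} (hxy : x < y)
    (hy : y = ⊤ ∨ ∃ z : V, y = (G.pr z : ℕ∞)) : rnk G x < rnk G y := by
  have hx : x ≠ ⊤ := hxy.ne_top
  rcases hy with rfl | ⟨z, rfl⟩
  · have hcard : (rnkSet G x).ncard ≤ (rnkSet G ⊤).ncard :=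
      Set.ncard_le_ncard (rnkSet_mono le_top) (rnkSet_finite ⊤)
    unfold rnk
    rw [if_neg hx, if_pos rfl]
    omega
  · unfold rnk
    rw [if_neg hx, if_neg (ENat.coe_ne_top _)]
    have hss : rnkSet G x ⊂ rnkSet G (G.pr z : ℕ∞) := by
      refine ⟨rnkSet_mono (le_of_lt hxy), ?_⟩
      intro hsub
      have hmem : G.pr z ∈ rnkSet G (G.pr z : ℕ∞) := ⟨⟨z, rfl⟩, le_rfl⟩
      have := (hsub hmem).2
      exact absurd (lt_of_lt_of_le hxy this) (lt_irrefl _)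
    have := Set.ncard_lt_ncard hss (rnkSet_finite _)
    omega

lemma rnk_le (x : ℕ∞) : rnk G x ≤ (Set.range G.pr).ncard + 1 := by
  unfold rnk
  have h1 : (rnkSet G x).ncard ≤ (Set.range G.pr).ncard :=
    Set.ncard_le_ncard (fun p hp => hp.1) (Set.finite_range G.pr)
  split <;> omega

/-- The termination measure. -/
def mu (J : Justification G) : ℕ :=
  ∑ u : V, if J.Justified u then (Fintype.card V + 1) ^ (rnk G (J.jl u)) else 0

lemma mu_le (J : Justification G) :
    J.mu ≤ Fintype.card V * (Fintype.card V + 1) ^ ((Set.range G.pr).ncard + 1) := by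
  have h1 : J.mu ≤ ∑ _u : V, (Fintype.card V + 1) ^ ((Set.range G.pr).ncard + 1) := by
    unfold mu
    apply Finset.sum_le_sum
    intro u _
    split
    · exact Nat.pow_le_pow_right (by omega) (rnk_le _)
    · exact Nat.zero_le _
  calc J.mu ≤ _ := h1
    _ = _ := by rw [Finset.sum_const, Finset.card_univ, smul_eq_mul]

variable {J : Justification G} {v : V} {dj : Set (V × V)} {α : Fin 2}

lemma jl_lt_jlDJ_of_strict (hS : J.Safe) (hwin : G.WinsDJ J.H v α dj)
    (hlvl : if J.Justified v then J.jl v < J.jlDJ dj else J.jl v ≤ J.jlDJ dj)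
    (hcase : J.Justified v ∨ J.H v ≠ α) : J.jl v < J.jlDJ dj := by
  by_cases hJv : J.Justified v
  · rw [if_pos hJv] at hlvl
    exact hlvl
  · rcases hcase with h | hv
    · exact absurd h hJv
    · have hjlv : J.jl v = (G.pr v : ℕ∞) := jl_eq_pr hS.2.2 hJv
      have hHd : J.H v = G.Hd v := hS.2.1 v hJv
      have hge : J.jl v ≤ J.jlDJ dj := hlvl_le hlvl
      rcases eq_or_ne (J.jlDJ dj) ⊤ with htop | hne
      · rw [htop, hjlv]
        exact lt_of_le_of_ne le_top (ENat.coe_ne_top _)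
      · obtain ⟨p, hp, hpeq⟩ := jlDJ_attained (dj_nonempty hwin.1)
        have hfin : J.jl p.2 ≠ ⊤ := by rw [hpeq]; exact hne
        obtain ⟨m, hm⟩ := WithTop.ne_top_iff_exists.mp hfin
        have hpar : Fin.ofNat 2 m = J.H p.2 := jl_parity hS.1.1 hS.2.1 hm.symm
        have hHp : J.H p.2 = α := hwin.2 p hp
        have hparv : Fin.ofNat 2 (G.pr v : ℕ) = J.H v := by rw [hHd]; rfl
        have hneq : G.pr v ≠ m := by
          intro he
          apply hv
          rw [← hHp, ← hpar, ← he, hparv]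
        have hlem : (G.pr v : ℕ∞) ≤ (m : ℕ∞) := by
          calc (G.pr v : ℕ∞) = J.jl v := hjlv.symm
            _ ≤ J.jlDJ dj := hge
            _ = J.jl p.2 := hpeq.symm
            _ = (m : ℕ∞) := hm.symm
        have hltm : G.pr v < m := lt_of_le_of_ne (by exact_mod_cast hlem) hneq
        calc J.jl v = (G.pr v : ℕ∞) := hjlv
          _ < (m : ℕ∞) := by exact_mod_cast hltm
          _ = J.jl p.2 := hm
          _ = J.jlDJ dj := hpeq

theorem justify_mu_lt (hS : J.Safe) (hwin : G.WinsDJ J.H v α dj)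
    (hlvl : if J.Justified v then J.jl v < J.jlDJ dj else J.jl v ≤ J.jlDJ dj) :
    J.mu < (justify G J v dj α).mu := by
  classical
  have hnpos : 0 < Fintype.card V := Fintype.card_pos_iff.2 ⟨v⟩
  set n := Fintype.card V with hn
  set J' := justify G J v dj α with hJ'
  have hjl'v : J.jlDJ dj ≤ J'.jl v := justify_jlDJ_le_jl_v hS.1.1 hwin
  set r' : ℕ := rnk G (J'.jl v) with hr'
  have hr'pos : 1 ≤ r' := by
    have hle : (G.pr v : ℕ∞) ≤ J'.jl v := justify_safe3 hS hwin hlvl v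
    have hmem : G.pr v ∈ rnkSet G (J'.jl v) := ⟨⟨v, rfl⟩, hle⟩
    have hpos : 0 < (rnkSet G (J'.jl v)).ncard :=
      (Set.ncard_pos (rnkSet_finite _)).2 ⟨_, hmem⟩
    rw [hr']
    unfold rnk
    omega
  have hwit : J'.jl v = ⊤ ∨ ∃ z : V, J'.jl v = (G.pr z : ℕ∞) := by
    rcases eq_or_ne (J'.jl v) ⊤ with h | h
    · exact Or.inl h
    · obtain ⟨z, _, hzeq⟩ := jl_attained (u := v) (J := J') h
      exact Or.inr ⟨z, hzeq.symm⟩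
  set t : V → ℕ := fun u => if J.Justified u then (n + 1) ^ (rnk G (J.jl u)) else 0 with ht
  set t' : V → ℕ := fun u => if J'.Justified u then (n + 1) ^ (rnk G (J'.jl u)) else 0 with ht'
  set K : Finset V := Finset.univ.filter (fun u => u ∈ J.Rset v α ∨ u = v) with hK
  have hvK : v ∈ K := by simp [hK]
  have hout : ∀ u ∉ K, t u ≤ t' u := by
    intro u hu
    have hur : u ∉ J.Rset v α ∧ u ≠ v := by
      rw [hK, Finset.mem_filter] at hu
      push_neg at hu
      exact hu (Finset.mem_univ u)
    by_cases hj : J.Justified u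
    · have hj' : J'.Justified u := (justify_justified hwin).2 (Or.inr ⟨hur.1, hur.2, hj⟩)
      rw [ht, ht']
      simp only [if_pos hj, if_pos hj']
      apply Nat.pow_le_pow_right (by omega)
      exact rnk_mono (justify_jl_ge hwin (hlvl_le hlvl) hur.1 hur.2)
    · rw [ht]
      simp only [if_neg hj]
      exact Nat.zero_le _
  have hinK : ∀ u ∈ K, t u ≤ (n + 1) ^ (r' - 1) := by
    intro u huK
    have huK' : u ∈ J.Rset v α ∨ u = v := by
      rw [hK, Finset.mem_filter] at huK
      exact huK.2
    by_cases hj : J.Justified u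
    · have hjlu : J.jl u ≤ J.jl v ∧ (J.Justified v ∨ J.H v ≠ α) := by
        rcases huK' with huR | rfl
        · exact ⟨jl_mono (mem_Rset_iff.1 huR).2, Or.inr (mem_Rset_iff.1 huR).1⟩
        · exact ⟨le_rfl, Or.inl hj⟩
      have hlt : J.jl v < J.jlDJ dj := jl_lt_jlDJ_of_strict hS hwin hlvl hjlu.2
      have hrnk : rnk G (J.jl u) < r' := by
        calc rnk G (J.jl u) ≤ rnk G (J.jl v) := rnk_mono hjlu.1
          _ < r' := rnk_strict (lt_of_lt_of_le hlt hjl'v) hwit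
      rw [ht]
      simp only [if_pos hj]
      exact Nat.pow_le_pow_right (by omega) (by omega)
    · rw [ht]
      simp only [if_neg hj]
      exact Nat.zero_le _
  have hK1 : ∑ u ∈ K, t u ≤ K.card * (n + 1) ^ (r' - 1) :=
    Finset.sum_le_card_nsmul K t _ hinK
  have hKcard : K.card ≤ n := by rw [hn, ← Finset.card_univ]; exact Finset.card_le_univ K
  have hlt2 : ∑ u ∈ K, t u < (n + 1) ^ r' := by
    calc ∑ u ∈ K, t u ≤ n * (n + 1) ^ (r' - 1) :=
          le_trans hK1 (Nat.mul_le_mul_right _ hKcard)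
      _ < (n + 1) * (n + 1) ^ (r' - 1) :=
          Nat.mul_lt_mul_of_lt_of_le (by omega) le_rfl (by positivity)
      _ = (n + 1) ^ r' := by
          rw [← pow_succ']
          congr 1
          omega
  have hK2 : (n + 1) ^ r' ≤ ∑ u ∈ K, t' u := by
    have hv' : t' v = (n + 1) ^ r' := by
      rw [ht']
      exact if_pos ((justify_justified (J := J) hwin).2 (Or.inl rfl))
    calc (n + 1) ^ r' = t' v := hv'.symm
      _ ≤ ∑ u ∈ K, t' u := Finset.single_le_sum (fun u _ => Nat.zero_le _) hvK
  have hmuJ : J.mu = ∑ u ∈ K, t u + ∑ u ∈ Kᶜ, t u := (Finset.sum_add_sum_compl K t).symm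
  have hmuJ' : J'.mu = ∑ u ∈ K, t' u + ∑ u ∈ Kᶜ, t' u := (Finset.sum_add_sum_compl K t').symm
  rw [hmuJ, hmuJ']
  have hcompl : ∑ u ∈ Kᶜ, t u ≤ ∑ u ∈ Kᶜ, t' u :=
    Finset.sum_le_sum (fun u hu => hout u (Finset.mem_compl.1 hu))
  have := Nat.add_lt_add_of_lt_of_le hlt2 hcompl
  omega

end Justification

end Measure


section Final

variable {V : Type*} {G : ParityGame V}

open Justification in
lemma empty_safe : (Justification.empty G).Safe := by
  refine ⟨⟨?_, ?_⟩, ?_, ?_⟩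
  · rintro x ⟨w, hw⟩
    exact (hw : False).elim
  · intro π hπ
    exact ((hπ 0 : False)).elim
  · intro x _
    rfl
  · intro x
    apply le_jl
    intro w hw
    rcases Relation.ReflTransGen.cases_head hw.1 with h0 | ⟨c, hc, _⟩
    · rw [h0]
    · exact ((hc : False)).elim

open Justification in
lemma progress [Fintype V] {J : Justification G} (hS : J.Safe) {u : V}
    (hunj : ¬ J.Justified u) :
    ∃ (v : V) (dj : Set (V × V)) (α : Fin 2), G.WinsDJ J.H v α dj ∧
      (if J.Justified v then J.jl v < J.jlDJ dj else J.jl v ≤ J.jlDJ dj) := by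
  classical
  obtain ⟨v, hvmem, hvmin⟩ := Finset.exists_min_image
    (Finset.univ.filter fun x => ¬ J.Justified x) G.pr ⟨u, by simp [hunj]⟩
  have hvunj : ¬ J.Justified v := (Finset.mem_filter.1 hvmem).2
  have hmin : ∀ x, ¬ J.Justified x → G.pr v ≤ G.pr x := fun x hx => hvmin x (by simp [hx])
  have hself : ∀ a : Fin 2, a ≠ a + 1 := by decide
  have hkey : ∃ (α : Fin 2) (dj : Set (V × V)), G.WinsDJ J.H v α dj := by
    by_cases hex : ∃ w, G.E v w ∧ J.H w = G.owner v
    · obtain ⟨w, hEw, hHw⟩ := hex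
      refine ⟨G.owner v, {(v, w)}, ⟨⟨fun _ => ⟨w, hEw, rfl⟩, fun h => absurd rfl h⟩, ?_⟩⟩
      rintro p hp
      rw [Set.mem_singleton_iff] at hp
      subst hp
      exact hHw
    · push_neg at hex
      refine ⟨G.owner v + 1, {p | p.1 = v ∧ G.E v p.2},
        ⟨⟨fun h => (hself _ h).elim, fun _ => rfl⟩, ?_⟩⟩
      rintro p ⟨h1, h2⟩
      exact fin2_ne (hex p.2 h2)
  obtain ⟨α, dj, hwin⟩ := hkey
  refine ⟨v, dj, α, hwin, ?_⟩
  rw [if_neg hvunj, jl_eq_pr hS.2.2 hvunj]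
  apply le_jlDJ
  intro p _
  apply le_jl
  intro w hw
  exact_mod_cast hmin w hw.2

open Justification in
lemma strat_winning [Fintype V] {J : Justification G} (hS : J.Safe)
    (hall : ∀ x, J.Justified x) (v : V) (π : ℕ → V) (h0 : π 0 = v)
    (hπ : IsInfPath G.E π) (hcons : Consistent (J.strat (J.H v)) π) :
    G.InfWonBy π (J.H v) := by
  have step : ∀ i, J.H (π i) = J.H v → J.D (π i) (π (i + 1)) ∧ J.H (π (i + 1)) = J.H v := by
    intro i hH
    obtain ⟨hdj, htar⟩ := hS.1.1 (π i) (hall (π i))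
    by_cases ho : G.owner (π i) = J.H (π i)
    · obtain ⟨w, hEw, houtw⟩ := hdj.1 ho
      have hmem : (π i, w) ∈ J.outEdges (π i) := by rw [houtw]; rfl
      have hDw : J.D (π i) w := hmem.2
      have hst : J.strat (J.H v) (π i) w := ⟨hDw, by rw [ho, hH], hH⟩
      have hnext : π (i + 1) = w := hcons i w hst
      have hHw := htar (π i, w) hmem
      constructor
      · rw [hnext]
        exact hDw
      · rw [hnext]
        exact hHw.trans hH
    · have houtw : J.outEdges (π i) = {p | p.1 = π i ∧ G.E (π i) p.2} := hdj.2 ho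
      have hmem : (π i, π (i + 1)) ∈ J.outEdges (π i) := by
        rw [houtw]
        exact ⟨rfl, hπ i⟩
      refine ⟨hmem.2, ?_⟩
      exact (htar _ hmem).trans hH
  have hHconst : ∀ i, J.H (π i) = J.H v := by
    intro i
    induction i with
    | zero => rw [h0]
    | succ m ih => exact (step m ih).2
  have hD : IsInfPath J.D π := fun i => (step i (hHconst i)).1
  have hwon := hS.1.2 π hD
  rwa [hHconst 0] at hwon

end Final

/-- starting from the empty safe justification `(V, ∅, H_d)`,
there is no infinite sequence of executable `Justify` steps, and any finite
sequence of such steps that cannot be prolonged ends in a safe justification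
`J^k` in which every node is justified; moreover its hypothesis `H^k` is the
winning function of the parity game: for every node `v`, every play of `G`
from `v` consistent with `σ_{J^k, H^k v}` is won by `H^k v` (so the
`σ_{J^k,α}` are winning strategies on the respective winning sets). -/
theorem stmt_16 {V : Type*} [Fintype V] (G : ParityGame V) :
    (¬ ∃ f : ℕ → Justification G, f 0 = Justification.empty G ∧
        ∀ i, JustifyStep G (f i) (f (i + 1))) ∧
    (∀ (k : ℕ) (f : ℕ → Justification G), f 0 = Justification.empty G →
      (∀ i < k, JustifyStep G (f i) (f (i + 1))) →
      (∀ J', ¬ JustifyStep G (f k) J') →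
      (f k).Safe ∧ (∀ v, (f k).Justified v) ∧
      ∀ (v : V) (π : ℕ → V), π 0 = v → IsInfPath G.E π →
        Consistent ((f k).strat ((f k).H v)) π →
        G.InfWonBy π ((f k).H v)) := by
  constructor
  · rintro ⟨f, h0, hstep⟩
    have hmu : ∀ i, (f i).mu < (f (i + 1)).mu := by
      intro i
      obtain ⟨v, dj, α, hS, hwin, hlvl, heq⟩ := hstep i
      rw [heq]
      exact Justification.justify_mu_lt hS hwin hlvl
    have hlb : ∀ i, i ≤ (f i).mu := by
      intro i
      induction i with
      | zero => exact Nat.zero_le _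
      | succ m ih => exact Nat.lt_of_le_of_lt ih (hmu m)
    set C := Fintype.card V * (Fintype.card V + 1) ^ ((Set.range G.pr).ncard + 1) with hC
    have hub : ∀ i, (f i).mu ≤ C := fun i => Justification.mu_le (f i)
    have h1 := hlb (C + 1)
    have h2 := hub (C + 1)
    omega
  · intro k f h0 hsteps hmax
    have hsafe : ∀ i, i ≤ k → (f i).Safe := by
      intro i
      induction i with
      | zero =>
        intro _
        rw [h0]
        exact empty_safe
      | succ m _ =>
        intro hik
        obtain ⟨v, dj, α, hS, hwin, hlvl, heq⟩ := hsteps m (by omega)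
        rw [heq]
        exact Justification.justify_safe hS hwin hlvl
    have hSk : (f k).Safe := hsafe k le_rfl
    have hall : ∀ x, (f k).Justified x := by
      by_contra hne
      push_neg at hne
      obtain ⟨u, hu⟩ := hne
      obtain ⟨v, dj, α, hwin, hlvl⟩ := progress hSk hu
      exact hmax _ ⟨v, dj, α, hSk, hwin, hlvl, rfl⟩
    exact ⟨hSk, hall, fun v π h0' hπ hcons => strat_winning hSk hall v π h0' hπ hcons⟩

end ParityGame

end
end
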